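/- Let k be a field, V a k-vector space of finite dimension d, x₁,…,xₙ pairwise commuting k-linear endomorphisms of V, and v₁,…,v_r ∈ V. Then the smallest k-subspace of V containing v₁,…,v_r and invariant under x₁,…,xₙ equals V (i.e. the tuple (x₁,…,xₙ,v₁,…,v_r) is stable) if and only if the finite set { x₁^{a₁} ∘ x₂^{a₂} ∘ ⋯ ∘ xₙ^{aₙ} (vⱼ) : 0 ≤ aᵢ ≤ d−1 for all i, 1 ≤ j ≤ r } spans V over k. -/

import Mathlib

lemma prod_pull {M : Type*} [Monoid M] : ∀ (n : ℕ) (x : Fin n → M),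
    (∀ i j, Commute (x i) (x j)) → ∀ (b : Fin n → ℕ) (i0 : Fin n),
    (List.ofFn fun i => x i ^ b i).prod =
      x i0 ^ b i0 * (List.ofFn fun i => x i ^ Function.update b i0 0 i).prod := by
  intro n
  induction n with
  | zero => intro x hx b i0; exact i0.elim0
  | succ n ih =>
    intro x hx b i0
    induction i0 using Fin.cases with
    | zero =>
      rw [List.ofFn_succ, List.ofFn_succ, List.prod_cons, List.prod_cons,
        Function.update_self, pow_zero, one_mul]
      have : (fun i : Fin n => x i.succ ^ Function.update b 0 0 i.succ)
          = fun i : Fin n => x i.succ ^ b i.succ := by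
        funext i
        rw [Function.update_of_ne (Fin.succ_ne_zero i)]
      rw [this]
    | succ i' =>
      rw [List.ofFn_succ, List.ofFn_succ, List.prod_cons, List.prod_cons]
      have htail : (fun i : Fin n => x i.succ ^ Function.update b i'.succ 0 i.succ)
          = fun i : Fin n => x i.succ ^ Function.update (fun i : Fin n => b i.succ) i' 0 i := by
        funext i
        by_cases h : i = i'
        · subst h; simp
        · rw [Function.update_of_ne h,
            Function.update_of_ne (fun hc => h (Fin.succ_injective _ hc))]
      have ih' := ih (fun i => x i.succ) (fun i j => hx _ _) (fun i => b i.succ) i'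
      rw [htail, Function.update_of_ne (Ne.symm (Fin.succ_ne_zero i')), ih',
        ← mul_assoc, ← mul_assoc, ((hx 0 i'.succ).pow_pow (b 0) (b i'.succ)).eq]


/-- a tuple `(x₁,…,xₙ,v₁,…,v_r)` is stable (the smallest subspace containing
the `vⱼ` and invariant under the `xᵢ` is all of `V`) iff the vectors
`x₁^{a₁} ∘ ⋯ ∘ xₙ^{aₙ} (vⱼ)` with all `aᵢ ≤ d − 1` span `V`. -/
theorem stable_iff_bounded_words_span (k : Type*) [Field k]
    (V : Type*) [AddCommGroup V] [Module k V] [FiniteDimensional k V]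
    (d n r : ℕ) (hd : Module.finrank k V = d)
    (x : Fin n → Module.End k V) (hx : ∀ i j, Commute (x i) (x j))
    (v : Fin r → V) :
    (∀ W : Submodule k V, (∀ j, v j ∈ W) → (∀ i, ∀ w ∈ W, x i w ∈ W) → W = ⊤) ↔
      Submodule.span k
          {w : V | ∃ (a : Fin n → ℕ) (j : Fin r),
            (∀ i, a i ≤ d - 1) ∧ w = (List.ofFn fun i => x i ^ a i).prod (v j)} = ⊤ := by
  set P : (Fin n → ℕ) → Module.End k V :=
    fun a => (List.ofFn fun i => x i ^ a i).prod with hP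
  set S : Submodule k V := Submodule.span k
      {w : V | ∃ (a : Fin n → ℕ) (j : Fin r),
        (∀ i, a i ≤ d - 1) ∧ w = P a (v j)} with hS
  constructor
  · intro hstable
    rcases Nat.eq_zero_or_pos d with hd0 | hd1
    · have hsub : Subsingleton V := by
        rw [← Module.finrank_zero_iff (R := k), hd, hd0]
      rw [eq_top_iff]
      intro w _
      exact (Subsingleton.elim (0 : V) w) ▸ S.zero_mem
    -- main case d ≥ 1
    have hpull : ∀ (a : Fin n → ℕ) (i0 : Fin n),
        P a = x i0 ^ a i0 * P (Function.update a i0 0) :=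
      fun a i0 => prod_pull n x hx a i0
    have h3 : ∀ (b : Fin n → ℕ) (i0 : Fin n) (c : ℕ),
        x i0 ^ c * P (Function.update b i0 0) = P (Function.update b i0 c) := by
      intro b i0 c
      rw [hpull (Function.update b i0 c) i0, Function.update_idem, Function.update_self]
    have hCH : ∀ i0 : Fin n, x i0 ^ d =
        ∑ m ∈ Finset.range d, (-((x i0).charpoly.coeff m)) • x i0 ^ m := by
      intro i0
      have hdeg : (x i0).charpoly.natDegree = d := by
        rw [LinearMap.charpoly_natDegree, hd]
      have h0 : (Polynomial.aeval (x i0)) (x i0).charpoly = 0 :=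
        LinearMap.aeval_self_charpoly (x i0)
      rw [Polynomial.aeval_eq_sum_range, hdeg, Finset.sum_range_succ] at h0
      have hlead : (x i0).charpoly.coeff d = 1 := by
        rw [← hdeg]; exact (LinearMap.charpoly_monic (x i0)).coeff_natDegree
      rw [hlead, one_smul] at h0
      have := eq_neg_of_add_eq_zero_right h0
      rw [this, ← Finset.sum_neg_distrib]
      exact Finset.sum_congr rfl fun m _ => (neg_smul _ _).symm
    have key : ∀ (N : ℕ) (a : Fin n → ℕ) (j : Fin r), (∑ i, a i) = N → P a (v j) ∈ S := by
      intro N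
      induction N using Nat.strong_induction_on with
      | _ N ih =>
        intro a j hsum
        by_cases hba : ∀ i, a i ≤ d - 1
        · exact Submodule.subset_span ⟨a, j, hba, rfl⟩
        · push_neg at hba
          obtain ⟨i0, hi0⟩ := hba
          have hdle : d ≤ a i0 := by omega
          have h1 : P a = ∑ m ∈ Finset.range d, (-((x i0).charpoly.coeff m)) •
              P (Function.update a i0 (m + (a i0 - d))) := by
            have e1 : P a = x i0 ^ d * (x i0 ^ (a i0 - d) * P (Function.update a i0 0)) := by
              rw [← mul_assoc, ← pow_add, hpull a i0]
              congr 2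
              omega
            rw [e1, hCH i0, Finset.sum_mul]
            refine Finset.sum_congr rfl fun m _ => ?_
            rw [smul_mul_assoc, ← mul_assoc, ← pow_add, h3]
          rw [h1, LinearMap.sum_apply]
          refine Submodule.sum_mem S fun m hm => ?_
          rw [LinearMap.smul_apply]
          refine Submodule.smul_mem S _ ?_
          have hmd : m < d := Finset.mem_range.mp hm
          have hE : ∑ i, a i = a i0 + ∑ i ∈ Finset.univ \ {i0}, a i := by
            rw [Finset.sum_eq_sum_sdiff_singleton_add (Finset.mem_univ i0), add_comm]
          have hE2 : ∑ i, Function.update a i0 (m + (a i0 - d)) i =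
              (m + (a i0 - d)) + ∑ i ∈ Finset.univ \ {i0}, a i := by
            rw [Finset.sum_update_of_mem (Finset.mem_univ i0)]
          exact ih _ (by omega) _ j rfl
    have hP0 : P (fun _ => 0) = 1 := by
      simp [hP]
    refine hstable S (fun j => ?_) (fun i w hw => ?_)
    · have := key 0 (fun _ => 0) j (by simp)
      rwa [hP0, Module.End.one_apply] at this
    · have hle : S ≤ Submodule.comap (x i) S := by
        rw [hS]
        refine Submodule.span_le.mpr ?_
        rintro w ⟨a, j, hba, rfl⟩
        rw [SetLike.mem_coe, Submodule.mem_comap]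
        have he : x i (P a (v j)) = P (Function.update a i (a i + 1)) (v j) := by
          rw [← Module.End.mul_apply, ← h3 a i (a i + 1), hpull a i, ← mul_assoc, ← pow_succ']
        rw [he]
        exact key _ _ _ rfl
      exact hle hw
  · intro hspan W hv hW
    have hWpow : ∀ (i : Fin n) (c : ℕ), ∀ w ∈ W, (x i ^ c) w ∈ W := by
      intro i c
      induction c with
      | zero => intro w hw; simpa using hw
      | succ c ihc =>
        intro w hw
        rw [pow_succ, Module.End.mul_apply]
        exact ihc _ (hW i w hw)
    have hWl : ∀ (l : List (Module.End k V)), (∀ f ∈ l, ∀ w ∈ W, f w ∈ W) →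
        ∀ w ∈ W, l.prod w ∈ W := by
      intro l
      induction l with
      | nil => intro _ w hw; simpa using hw
      | cons f t iht =>
        intro hmem w hw
        rw [List.prod_cons, Module.End.mul_apply]
        exact hmem f (by simp) _ (iht (fun g hg => hmem g (List.mem_cons_of_mem _ hg)) w hw)
    rw [eq_top_iff, ← hspan]
    refine Submodule.span_le.mpr ?_
    rintro w ⟨a, j, _, rfl⟩
    refine hWl _ ?_ _ (hv j)
    intro f hf
    obtain ⟨i, rfl⟩ := List.mem_ofFn.mp hf
    exact hWpow i (a i)
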